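/- For H > 0, with M(H,u,ξ) = (1/(gπ))·max(0, 2gH − (ξ−u)²)^{1/2} and kinetic entropy H_K(f,ξ,z) = (ξ²/2)·f + (g²π²/6)·f³ + g·z·f, one has ∫_ℝ H_K(M(H,u,ξ), ξ, z_b) dξ = (H/2)·u² + (g/2)·H² + g·H·z_b. -/

import Mathlib

open MeasureTheory Real

lemma sv_cont (a : ℝ) : Continuous (fun x : ℝ => Real.sqrt (a^2 - x^2)) := by
  fun_prop

lemma sv_I0 (a : ℝ) (ha : 0 < a) :
    ∫ x in (-a)..a, Real.sqrt (a^2 - x^2) = π * a^2 / 2 := by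
  have h := integral_sqrt_one_sub_sq
  have h2 : (a : ℝ) • ∫ x in (-1:ℝ)..1, Real.sqrt (a^2 - (a*x)^2)
      = ∫ x in (a * (-1:ℝ))..(a*1), Real.sqrt (a^2 - x^2) :=
    intervalIntegral.smul_integral_comp_mul_left (fun x => Real.sqrt (a^2 - x^2)) a
  have h3 : ∀ x : ℝ, Real.sqrt (a^2 - (a*x)^2) = a * Real.sqrt (1 - x^2) := by
    intro x
    rw [show a^2 - (a*x)^2 = a^2 * (1 - x^2) by ring, Real.sqrt_mul (by positivity),
      Real.sqrt_sq ha.le]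
  simp only [h3] at h2
  rw [intervalIntegral.integral_const_mul, h] at h2
  rw [show a * (-1:ℝ) = -a by ring, mul_one] at h2
  rw [← h2, smul_eq_mul]; ring

lemma sv_hasDeriv1 (a x : ℝ) (hx : x ∈ Set.Ioo (-a) a) :
    HasDerivAt (fun x : ℝ => (a^2 - x^2) * Real.sqrt (a^2 - x^2))
      (-3 * (x * Real.sqrt (a^2 - x^2))) x := by
  have hpos : 0 < a^2 - x^2 := by nlinarith [hx.1, hx.2]
  have hs : Real.sqrt (a^2 - x^2) ^ 2 = a^2 - x^2 := Real.sq_sqrt hpos.le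
  have hsp : 0 < Real.sqrt (a^2 - x^2) := Real.sqrt_pos.2 hpos
  have h1 : HasDerivAt (fun x : ℝ => a^2 - x^2) (-(2*x)) x := by
    simpa using ((hasDerivAt_pow 2 x).const_sub (a^2))
  have h2 : HasDerivAt (fun x : ℝ => Real.sqrt (a^2 - x^2))
      (-(2*x) / (2 * Real.sqrt (a^2 - x^2))) x := h1.sqrt hpos.ne'
  have := h1.fun_mul h2
  refine this.congr_deriv (Eq.symm ?_)
  field_simp
  linear_combination (-x) * hs

lemma sv_hasDeriv2 (a x : ℝ) (hx : x ∈ Set.Ioo (-a) a) :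
    HasDerivAt (fun x : ℝ => x * ((a^2 - x^2) * Real.sqrt (a^2 - x^2)))
      (a^2 * Real.sqrt (a^2 - x^2) - 4 * (x^2 * Real.sqrt (a^2 - x^2))) x := by
  have := (hasDerivAt_id x).fun_mul (sv_hasDeriv1 a x hx)
  refine this.congr_deriv (Eq.symm ?_)
  simp only [id]
  ring

lemma sv_Iodd (a : ℝ) (ha : 0 < a) :
    ∫ x in (-a)..a, x * Real.sqrt (a^2 - x^2) = 0 := by
  have hint : IntervalIntegrable (fun x : ℝ => -3 * (x * Real.sqrt (a^2 - x^2)))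
      volume (-a) a := (by fun_prop : Continuous fun x : ℝ => -3 * (x * Real.sqrt (a^2 - x^2))).intervalIntegrable _ _
  have hftc := intervalIntegral.integral_eq_sub_of_hasDerivAt_of_le (by linarith)
    ((by fun_prop : Continuous fun x : ℝ => (a^2 - x^2) * Real.sqrt (a^2 - x^2)).continuousOn)
    (fun x hx => sv_hasDeriv1 a x hx) hint
  rw [intervalIntegral.integral_const_mul] at hftc
  have hz : (-3 : ℝ) * ∫ x in (-a)..a, x * Real.sqrt (a^2 - x^2) = 0 := by
    rw [hftc]; simp [neg_sq]
  linarith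

lemma sv_I2 (a : ℝ) (ha : 0 < a) :
    ∫ x in (-a)..a, x^2 * Real.sqrt (a^2 - x^2) = π * a^4 / 8 := by
  have h0 : IntervalIntegrable (fun x : ℝ => a^2 * Real.sqrt (a^2 - x^2)) volume (-a) a :=
    (by fun_prop : Continuous fun x : ℝ => a^2 * Real.sqrt (a^2 - x^2)).intervalIntegrable _ _
  have h4 : IntervalIntegrable (fun x : ℝ => 4 * (x^2 * Real.sqrt (a^2 - x^2))) volume (-a) a :=
    (by fun_prop : Continuous fun x : ℝ => 4 * (x^2 * Real.sqrt (a^2 - x^2))).intervalIntegrable _ _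
  have hftc := intervalIntegral.integral_eq_sub_of_hasDerivAt_of_le (by linarith : -a ≤ a)
    ((by fun_prop : Continuous fun x : ℝ => x * ((a^2 - x^2) * Real.sqrt (a^2 - x^2))).continuousOn)
    (fun x hx => sv_hasDeriv2 a x hx) (h0.sub h4)
  rw [intervalIntegral.integral_sub h0 h4, intervalIntegral.integral_const_mul,
    intervalIntegral.integral_const_mul, sv_I0 a ha] at hftc
  simp only [neg_sq, sub_self, Real.sqrt_zero, mul_zero, zero_mul, neg_mul, sub_zero,
    neg_zero, sub_self] at hftc
  linarith

set_option maxRecDepth 100000 in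
theorem stmt3 (g H u zb : ℝ) (hg : 0 < g) (hH : 0 < H) :
    (∫ ξ : ℝ,
        (ξ ^ 2 / 2) * ((1 / (g * Real.pi)) * Real.sqrt (max 0 (2 * g * H - (ξ - u) ^ 2)))
        + (g ^ 2 * Real.pi ^ 2 / 6) *
            ((1 / (g * Real.pi)) * Real.sqrt (max 0 (2 * g * H - (ξ - u) ^ 2))) ^ 3
        + g * zb * ((1 / (g * Real.pi)) * Real.sqrt (max 0 (2 * g * H - (ξ - u) ^ 2)))) =
      H / 2 * u ^ 2 + g / 2 * H ^ 2 + g * H * zb := by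
  set f : ℝ → ℝ := fun ξ =>
        (ξ ^ 2 / 2) * ((1 / (g * Real.pi)) * Real.sqrt (max 0 (2 * g * H - (ξ - u) ^ 2)))
        + (g ^ 2 * Real.pi ^ 2 / 6) *
            ((1 / (g * Real.pi)) * Real.sqrt (max 0 (2 * g * H - (ξ - u) ^ 2))) ^ 3
        + g * zb * ((1 / (g * Real.pi)) * Real.sqrt (max 0 (2 * g * H - (ξ - u) ^ 2))) with hf
  set a : ℝ := Real.sqrt (2 * g * H) with haa
  have ha : 0 < a := Real.sqrt_pos.2 (by positivity)
  have ha2 : a ^ 2 = 2 * g * H := Real.sq_sqrt (by positivity)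
  -- Step 1: restrict to the support
  have hvanish : ∀ ξ : ℝ, ξ ∉ Set.Ioc (u - a) (u + a) → f ξ = 0 := by
    intro ξ hξ
    have hout : 2 * g * H - (ξ - u) ^ 2 ≤ 0 := by
      simp only [Set.mem_Ioc, not_and_or, not_lt, not_le] at hξ
      rcases hξ with h | h
      · nlinarith [ha2]
      · nlinarith [ha2]
    have hmax : max 0 (2 * g * H - (ξ - u) ^ 2) = 0 := max_eq_left hout
    rw [hf]
    simp only [hmax, Real.sqrt_zero, mul_zero, add_zero, zero_add]
    norm_num
  have h1 : (∫ ξ : ℝ, f ξ) = ∫ ξ in Set.Ioc (u - a) (u + a), f ξ :=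
    (setIntegral_eq_integral_of_forall_compl_eq_zero hvanish).symm
  have h2 : (∫ ξ in Set.Ioc (u - a) (u + a), f ξ) = ∫ ξ in (u - a)..(u + a), f ξ :=
    (intervalIntegral.integral_of_le (by linarith)).symm
  have h3 : (∫ ξ in (u - a)..(u + a), f ξ) = ∫ x in (-a)..a, f (x + u) := by
    rw [intervalIntegral.integral_comp_add_right f u, show -a + u = u - a by ring,
      show a + u = u + a by ring]
  have h4 : (∫ x in (-a)..a, f (x + u)) =
      ∫ x in (-a)..a,
        ((1/(g*π))*u^2/2 + g*zb*(1/(g*π)) + g^2*π^2/6*(1/(g*π))^3*a^2) * Real.sqrt (a^2 - x^2)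
        + ((1/(g*π))*u) * (x * Real.sqrt (a^2 - x^2))
        + ((1/(g*π))/2 - g^2*π^2/6*(1/(g*π))^3) * (x^2 * Real.sqrt (a^2 - x^2)) := by
    apply intervalIntegral.integral_congr
    intro x hx
    rw [Set.uIcc_of_le (by linarith)] at hx
    have hx2 : x ^ 2 ≤ a ^ 2 := sq_le_sq' hx.1 hx.2
    have hmax : max 0 (2 * g * H - (x + u - u) ^ 2) = a ^ 2 - x ^ 2 := by
      rw [max_eq_right (by nlinarith [ha2])]
      rw [← ha2]; ring
    have hs2 : Real.sqrt (a^2 - x^2) ^ 2 = a^2 - x^2 := Real.sq_sqrt (by linarith)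
    simp only [hf, hmax]
    linear_combination (g^2*π^2/6*(1/(g*π))^3 * Real.sqrt (a^2-x^2)) * hs2
  have i1 : IntervalIntegrable (fun x : ℝ =>
      ((1/(g*π))*u^2/2 + g*zb*(1/(g*π)) + g^2*π^2/6*(1/(g*π))^3*a^2) * Real.sqrt (a^2 - x^2))
      volume (-a) a := (by fun_prop : Continuous _).intervalIntegrable _ _
  have i2 : IntervalIntegrable (fun x : ℝ =>
      ((1/(g*π))*u) * (x * Real.sqrt (a^2 - x^2))) volume (-a) a :=
    (by fun_prop : Continuous _).intervalIntegrable _ _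
  have i3 : IntervalIntegrable (fun x : ℝ =>
      ((1/(g*π))/2 - g^2*π^2/6*(1/(g*π))^3) * (x^2 * Real.sqrt (a^2 - x^2))) volume (-a) a :=
    (by fun_prop : Continuous _).intervalIntegrable _ _
  rw [h1, h2, h3, h4, intervalIntegral.integral_add (i1.add i2) i3,
    intervalIntegral.integral_add i1 i2, intervalIntegral.integral_const_mul,
    intervalIntegral.integral_const_mul, intervalIntegral.integral_const_mul,
    sv_I0 a ha, sv_Iodd a ha, sv_I2 a ha]
  have hπ : (π : ℝ) ≠ 0 := Real.pi_ne_zero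
  have h4a : a ^ 4 = (2*g*H)^2 := by rw [show a^4 = (a^2)^2 by ring, ha2]
  rw [ha2, h4a]
  field_simp
  ring
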